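/- Let f : M → N be a morphism in Preglid FR. Kernels and cokernels of f exist in Preglid FR, and for each object λ of oFF_Λ R (λ ∈ Λ⊔{∞}) there are canonical isomorphisms: (ker f)(λ) ≅ ker(f_λ); (coker f)(λ) ≅ im(N(λ) → coker(f_∞)), where N(λ) → coker(f_∞) is the composite of N(1_{λ,∞}) with the quotient map N(∞) → coker(f_∞); (im f)(λ) ≅ ker(N(λ) → coker(f_∞)); and (coim f)(λ) ≅ im(f_λ). Here im f := ker(N → coker f) and coim f := coker(ker f → M), computed in Preglid FR. -/

import Mathlib

set_option linter.unusedSectionVars false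
set_option maxHeartbeats 1000000
set_option synthInstance.maxHeartbeats 1000000
set_option maxHeartbeats 2000000

noncomputable section

open CategoryTheory CategoryTheory.Limits

universe u

namespace GliderPaper

/-- A `Γ`-filtration `FR` on a unital ring `R`: additive subgroups `F γ` with
`1 ∈ F 1`, monotone in `γ`, and multiplicative. -/
structure RingFiltration (Γ : Type u) [Group Γ] [PartialOrder Γ] (R : Type u) [Ring R] where
  F : Γ → AddSubgroup R
  one_mem : (1 : R) ∈ F 1
  mono : ∀ {α β : Γ}, α ≤ β → F α ≤ F β
  mul_mem : ∀ {α β : Γ} {a b : R}, a ∈ F α → b ∈ F β → a * b ∈ F (α * β)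

variable {Γ : Type u} [Group Γ] [PartialOrder Γ]
  [CovariantClass Γ Γ (· * ·) (· ≤ ·)] [CovariantClass Γ Γ (Function.swap (· * ·)) (· ≤ ·)]
  {R : Type u} [Ring R]

/-- Objects of the extended filtered companion category `oFF_Λ R`:
the disjoint union `Λ ⊔ {∞}`. -/
inductive OFF (FR : RingFiltration Γ R) (Λ : Set Γ) : Type u
  | of (α : Λ)
  | infty

/-- Objects of the filtered companion category `FF_Λ R`: the set `Λ`. -/
inductive FF (FR : RingFiltration Γ R) (Λ : Set Γ) : Type u
  | of (α : Λ)

variable (FR : RingFiltration Γ R) (Λ : Set Γ)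

namespace OFF

/-- `le X Y` holds iff the canonical morphism `1_{X,Y}` is defined, i.e. `X ≤ Y` in `Λ`,
or `Y = ∞`. -/
def le : OFF FR Λ → OFF FR Λ → Prop
  | of α, of β => (α : Γ) ≤ (β : Γ)
  | _, infty => True
  | infty, of _ => False

open scoped Classical in
/-- The additive subgroup of `R` of morphisms `X ⟶ Y` in `oFF_Λ R`:
`Hom(α,β) = F_{βα⁻¹}R` for `α ≤ β` in `Λ`, `Hom(X,∞) = R`, and `0` otherwise. -/
noncomputable def homGrp : OFF FR Λ → OFF FR Λ → AddSubgroup R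
  | of α, of β => if (α : Γ) ≤ (β : Γ) then FR.F ((β : Γ) * (α : Γ)⁻¹) else ⊥
  | _, infty => ⊤
  | infty, of _ => ⊥

theorem le_refl' : ∀ X : OFF FR Λ, le FR Λ X X
  | of _ => _root_.le_refl _
  | infty => trivial

theorem one_mem_homGrp : ∀ {X Y : OFF FR Λ}, le FR Λ X Y → (1 : R) ∈ homGrp FR Λ X Y
  | of α, of β, h => by
      have h' : (α : Γ) ≤ (β : Γ) := h
      have h1 : (1 : Γ) ≤ (β : Γ) * (α : Γ)⁻¹ := by
        rw [← mul_inv_cancel (α : Γ)]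
        exact mul_le_mul_left h' _
      simpa [homGrp, if_pos h'] using FR.mono h1 FR.one_mem
  | of _, infty, _ => trivial
  | infty, infty, _ => trivial
  | infty, of _, h => h.elim

theorem mul_mem_homGrp : ∀ {X Y Z : OFF FR Λ} {f g : R},
    f ∈ homGrp FR Λ X Y → g ∈ homGrp FR Λ Y Z → g * f ∈ homGrp FR Λ X Z := by
  intro X Y Z f g hf hg
  cases X <;> cases Y <;> cases Z <;> simp only [homGrp] at hf hg ⊢ <;> try trivial
  case of.of.of a b c =>
    by_cases hab : (a : Γ) ≤ (b : Γ)
    · by_cases hbc : (b : Γ) ≤ (c : Γ)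
      · rw [if_pos hab] at hf
        rw [if_pos hbc] at hg
        rw [if_pos (le_trans hab hbc)]
        have := FR.mul_mem hg hf
        rwa [show (c : Γ) * (b : Γ)⁻¹ * ((b : Γ) * (a : Γ)⁻¹) = (c : Γ) * (a : Γ)⁻¹ by
          group] at this
      · rw [if_neg hbc] at hg
        rw [AddSubgroup.mem_bot] at hg
        subst hg
        simp only [zero_mul]
        exact AddSubgroup.zero_mem _
    · rw [if_neg hab] at hf
      rw [AddSubgroup.mem_bot] at hf
      subst hf
      simp only [mul_zero]
      exact AddSubgroup.zero_mem _
  case of.infty.of a c =>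
    rw [AddSubgroup.mem_bot] at hg
    subst hg
    simp only [zero_mul]
    exact AddSubgroup.zero_mem _
  case infty.of.of b c =>
    rw [AddSubgroup.mem_bot] at hf
    subst hf
    simp only [mul_zero]
    exact AddSubgroup.zero_mem _
  case infty.infty.of c =>
    rw [AddSubgroup.mem_bot] at hg
    subst hg
    simp only [zero_mul]
    exact AddSubgroup.zero_mem _

instance : Category (OFF FR Λ) where
  Hom X Y := homGrp FR Λ X Y
  id X := ⟨1, one_mem_homGrp FR Λ (le_refl' FR Λ X)⟩
  comp f g := ⟨g.1 * f.1, mul_mem_homGrp FR Λ f.2 g.2⟩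
  id_comp f := Subtype.ext (mul_one f.1)
  comp_id f := Subtype.ext (one_mul f.1)
  assoc f g h := Subtype.ext (mul_assoc h.1 g.1 f.1).symm

instance : Preadditive (OFF FR Λ) where
  homGroup X Y := inferInstanceAs (AddCommGroup (homGrp FR Λ X Y))
  add_comp _ _ _ f f' g := Subtype.ext (mul_add g.1 f.1 f'.1)
  comp_add _ _ _ f g g' := Subtype.ext (add_mul g.1 g'.1 f.1)

end OFF

namespace FF

/-- The inclusion of the objects of `FF_Λ R` into those of `oFF_Λ R`. -/
def toOFF : FF FR Λ → OFF FR Λ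
  | of α => .of α

instance : Category (FF FR Λ) where
  Hom X Y := OFF.homGrp FR Λ (toOFF FR Λ X) (toOFF FR Λ Y)
  id X := ⟨1, OFF.one_mem_homGrp FR Λ (OFF.le_refl' FR Λ _)⟩
  comp f g := ⟨g.1 * f.1, OFF.mul_mem_homGrp FR Λ f.2 g.2⟩
  id_comp f := Subtype.ext (mul_one f.1)
  comp_id f := Subtype.ext (one_mul f.1)
  assoc f g h := Subtype.ext (mul_assoc h.1 g.1 f.1).symm

instance : Preadditive (FF FR Λ) where
  homGroup X Y := inferInstanceAs (AddCommGroup (OFF.homGrp FR Λ (toOFF FR Λ X) (toOFF FR Λ Y)))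
  add_comp _ _ _ f f' g := Subtype.ext (mul_add g.1 f.1 f'.1)
  comp_add _ _ _ f g g' := Subtype.ext (add_mul g.1 g'.1 f.1)

end FF

/-- The inclusion functor `j : FF_Λ R ⥤ oFF_Λ R`. -/
def jF : FF FR Λ ⥤ OFF FR Λ where
  obj := FF.toOFF FR Λ
  map f := f
  map_id _ := rfl
  map_comp _ _ := rfl

instance : (jF FR Λ).Additive := ⟨rfl⟩

/-- `Mod C`: the category of additive functors from `C` to abelian groups. -/
abbrev Mod (C : Type u) [Category.{u} C] [Preadditive C] : Type (u + 1) :=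
  C ⥤+ AddCommGrpCat.{u}

/-- The component at `X` of a morphism in `Mod C`. -/
def mapp {C : Type u} [Category.{u} C] [Preadditive C] {M N : Mod C} (f : M ⟶ N) (X : C) :
    M.obj.obj X ⟶ N.obj.obj X :=
  (show M.obj ⟶ N.obj from f.hom).app X

/-- The canonical morphism `1_{X,Y}` in `oFF_Λ R`, given by `1_R`. -/
def unitHom (X Y : OFF FR Λ) (h : OFF.le FR Λ X Y) : X ⟶ Y :=
  ⟨1, OFF.one_mem_homGrp FR Λ h⟩

/-- The canonical morphism `1_{α,β}` in `FF_Λ R`, given by `1_R`. -/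
def unitHomFF (α β : Λ) (h : (α : Γ) ≤ (β : Γ)) : (FF.of α : FF FR Λ) ⟶ FF.of β :=
  unitHom FR Λ (.of α) (.of β) h

/-- A module `M` over `oFF_Λ R` is a preglider if all the maps `M(1_{X,Y})` are injective. -/
def IsPreglider (M : Mod (OFF FR Λ)) : Prop :=
  ∀ (X Y : OFF FR Λ) (h : OFF.le FR Λ X Y), Function.Injective (M.obj.map (unitHom FR Λ X Y h))

/-- A module `M` over `FF_Λ R` is a prefragment if all the maps `M(1_{α,β})` are injective. -/
def IsPrefragment (M : Mod (FF FR Λ)) : Prop :=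
  ∀ (α β : Λ) (h : (α : Γ) ≤ (β : Γ)), Function.Injective (M.obj.map (unitHomFF FR Λ α β h))

/-- The category of pregliders: the full subcategory of `Mod (oFF_Λ R)` of pregliders. -/
abbrev Preglid : Type (u + 1) :=
  ObjectProperty.FullSubcategory (fun M : Mod (OFF FR Λ) => IsPreglider FR Λ M)

instance : Preadditive (Preglid FR Λ) := Preadditive.inducedCategory _

/-- The category of prefragments: the full subcategory of `Mod (FF_Λ R)` of prefragments. -/
abbrev Prefrag : Type (u + 1) :=
  ObjectProperty.FullSubcategory (fun M : Mod (FF FR Λ) => IsPrefragment FR Λ M)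

instance : Preadditive (Prefrag FR Λ) := Preadditive.inducedCategory _

/-- The inclusion `Preglid FR Λ ⥤ Mod (oFF_Λ R)`. -/
def iotaF : Preglid FR Λ ⥤ Mod (OFF FR Λ) := ObjectProperty.ι _

/-- The inclusion `Prefrag FR Λ ⥤ Mod (FF_Λ R)`. -/
def etaF : Prefrag FR Λ ⥤ Mod (FF FR Λ) := ObjectProperty.ι _

/-- The component at `X` of a morphism of pregliders. -/
def pgapp {M N : Preglid FR Λ} (f : M ⟶ N) (X : OFF FR Λ) :
    M.obj.obj.obj X ⟶ N.obj.obj.obj X :=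
  mapp (show M.obj ⟶ N.obj from f.hom) X

/-- The component at `X` of a morphism of prefragments. -/
def pfapp {M N : Prefrag FR Λ} (f : M ⟶ N) (X : FF FR Λ) :
    M.obj.obj.obj X ⟶ N.obj.obj.obj X :=
  mapp (show M.obj ⟶ N.obj from f.hom) X

/-- The class `Σ` of morphisms of pregliders all of whose components at objects of `Λ`
are isomorphisms. -/
def SigmaClass : MorphismProperty (Preglid FR Λ) :=
  fun _ _ f => ∀ α : Λ, IsIso (pgapp FR Λ f (.of α))

/-- The category of glider representations: the localization of `Preglid FR Λ` at `Σ`. -/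
abbrev Glid : Type (u + 1) := (SigmaClass FR Λ).Localization

/-- The localization functor `Q : Preglid FR Λ ⥤ Glid FR Λ`. -/
def QF : Preglid FR Λ ⥤ Glid FR Λ := (SigmaClass FR Λ).Q

/-- The restriction functor `j^* : Mod (oFF_Λ R) ⥤ Mod (FF_Λ R)`. -/
def jStar : Mod (OFF FR Λ) ⥤ Mod (FF FR Λ) where
  obj M := ⟨jF FR Λ ⋙ M.obj, by haveI : M.obj.Additive := M.property; exact (inferInstance : (jF FR Λ ⋙ M.obj).Additive)⟩
  map {M N} f := ⟨Functor.whiskerLeft (jF FR Λ) (show M.obj ⟶ N.obj from f.hom)⟩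
  map_id _ := rfl
  map_comp _ _ := rfl

theorem isPrefragment_jStar (M : Mod (OFF FR Λ)) (hM : IsPreglider FR Λ M) :
    IsPrefragment FR Λ ((jStar FR Λ).obj M) :=
  fun α β h => hM (.of α) (.of β) h

/-- The restriction functor `j^* : Preglid FR Λ ⥤ Prefrag FR Λ`. -/
def jRes : Preglid FR Λ ⥤ Prefrag FR Λ where
  obj M := ⟨(jStar FR Λ).obj M.obj, isPrefragment_jStar FR Λ M.obj M.property⟩
  map f := ⟨(jStar FR Λ).map f.hom⟩
  map_id M := by ext1; exact (jStar FR Λ).map_id M.obj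
  map_comp f g := by ext1; exact (jStar FR Λ).map_comp f.hom g.hom

theorem sigma_isInvertedBy : (SigmaClass FR Λ).IsInvertedBy (jRes FR Λ) := by
  intro M N f hf
  haveI : (AdditiveFunctor.forget (FF FR Λ) AddCommGrpCat.{u}).Faithful :=
    ObjectProperty.faithful_ι _
  haveI : ∀ X : FF FR Λ, IsIso
      (((ObjectProperty.ι (fun M : Mod (FF FR Λ) => IsPrefragment FR Λ M) ⋙
        AdditiveFunctor.forget _ _).map ((jRes FR Λ).map f)).app X) := by
    rintro ⟨α⟩
    exact hf α
  haveI : IsIso ((ObjectProperty.ι (fun M : Mod (FF FR Λ) => IsPrefragment FR Λ M) ⋙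
      AdditiveFunctor.forget _ _).map ((jRes FR Λ).map f)) :=
    NatIso.isIso_of_isIso_app _
  exact isIso_of_reflects_iso ((jRes FR Λ).map f)
    (ObjectProperty.ι (fun M : Mod (FF FR Λ) => IsPrefragment FR Λ M) ⋙
      AdditiveFunctor.forget _ _)

/-- The canonical fully faithful functor `φ : Glid FR Λ ⥤ Prefrag FR Λ`,
the unique functor with `Q ⋙ φ = j^*`. -/
def phiF : Glid FR Λ ⥤ Prefrag FR Λ :=
  Localization.Construction.lift (jRes FR Λ) (sigma_isInvertedBy FR Λ)

theorem phiF_fac : QF FR Λ ⋙ phiF FR Λ = jRes FR Λ :=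
  Localization.Construction.fac _ _


section Statements

variable {Γ : Type u} [Group Γ] [PartialOrder Γ]
  [CovariantClass Γ Γ (· * ·) (· ≤ ·)] [CovariantClass Γ Γ (Function.swap (· * ·)) (· ≤ ·)]
  {R : Type u} [Ring R]

/-- A morphism in `AddCommGrp`, viewed as an additive monoid homomorphism. -/
def toAddHom {A B : AddCommGrpCat.{u}} (f : A ⟶ B) : A →+ B := f.hom

theorem le_infty (FR : RingFiltration Γ R) (Λ : Set Γ) (X : OFF FR Λ) :
    OFF.le FR Λ X OFF.infty := by
  cases X <;> trivial

/-- The cokernel (in `AddCommGrp`) of the component `f_∞`. -/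
noncomputable def cokerInf (FR : RingFiltration Γ R) (Λ : Set Γ) {M N : Preglid FR Λ}
    (f : M ⟶ N) : AddCommGrpCat.{u} :=
  cokernel (pgapp FR Λ f OFF.infty)

/-- For `f : M ⟶ N` in `Preglid FR`, the composite `N(X) → N(∞) → coker (f_∞)` of the
structural map with the quotient map onto the cokernel of `f_∞`. -/
noncomputable def cmapTo (FR : RingFiltration Γ R) (Λ : Set Γ) {M N : Preglid FR Λ}
    (f : M ⟶ N) (X : OFF FR Λ) :
    N.obj.obj.obj X ⟶ cokerInf FR Λ f :=
  N.obj.obj.map (unitHom FR Λ X OFF.infty (le_infty FR Λ X)) ≫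
    cokernel.π (pgapp FR Λ f OFF.infty)

section Aux
variable {Γ : Type u} [Group Γ] [PartialOrder Γ]
  [CovariantClass Γ Γ (· * ·) (· ≤ ·)] [CovariantClass Γ Γ (Function.swap (· * ·)) (· ≤ ·)]
  {R : Type u} [Ring R] {FR : RingFiltration Γ R} {Λ : Set Γ}

/-- A morphism of pregliders as a natural transformation. -/
def natOf {M N : Preglid FR Λ} (f : M ⟶ N) : M.obj.obj ⟶ N.obj.obj := f.hom.hom

theorem natOf_comp {A B C : Preglid FR Λ} (g : A ⟶ B) (h : B ⟶ C) :
    natOf (g ≫ h) = natOf g ≫ natOf h := rfl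

theorem natOf_zero {A B : Preglid FR Λ} : natOf (0 : A ⟶ B) = 0 := rfl

theorem pghom_ext' {A B : Preglid FR Λ} {g h : A ⟶ B} (w : natOf g = natOf h) : g = h := by
  apply ObjectProperty.hom_ext
  apply ObjectProperty.hom_ext
  exact w

theorem pgapp_eq {M N : Preglid FR Λ} (f : M ⟶ N) (X : OFF FR Λ) :
    pgapp FR Λ f X = (natOf f).app X := rfl

theorem pghom_ext {A B : Preglid FR Λ} {g h : A ⟶ B}
    (w : ∀ X, (natOf g).app X = (natOf h).app X) : g = h :=
  pghom_ext' (NatTrans.ext (funext w))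

theorem comp_eq_zero_apply {A B C : Preglid FR Λ} {g : A ⟶ B} {h : B ⟶ C} (w : g ≫ h = 0)
    (X : OFF FR Λ) (x : A.obj.obj.obj X) : (natOf h).app X ((natOf g).app X x) = 0 := by
  have h2 := congrArg (fun t => (natOf t).app X) w
  simpa [natOf_comp, natOf_zero] using ConcreteCategory.congr_hom h2 x

theorem naturality_apply {A B : Preglid FR Λ} (t : A ⟶ B) {X Y : OFF FR Λ} (g : X ⟶ Y)
    (x : A.obj.obj.obj X) :
    (natOf t).app Y (A.obj.obj.map g x) = B.obj.obj.map g ((natOf t).app X x) := by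
  have h := ConcreteCategory.congr_hom ((natOf t).naturality g) x
  simpa only [CategoryTheory.comp_apply] using h

/-- Subfunctor of a functor to abelian groups determined by a stable family of subgroups. -/
def subFunctor (F : OFF FR Λ ⥤ AddCommGrpCat.{u}) (S : ∀ X : OFF FR Λ, AddSubgroup (F.obj X))
    (hS : ∀ {X Y : OFF FR Λ} (g : X ⟶ Y), ∀ x : F.obj X, x ∈ S X → F.map g x ∈ S Y) :
    OFF FR Λ ⥤ AddCommGrpCat.{u} where
  obj X := AddCommGrpCat.of (S X)
  map {X Y} g := AddCommGrpCat.ofHom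
    (((toAddHom (F.map g)).comp (S X).subtype).codRestrict (S Y) fun x => hS g x x.2)
  map_id X := AddCommGrpCat.ext fun x =>
    Subtype.ext (show F.map (𝟙 X) x.1 = x.1 by rw [F.map_id]; rfl)
  map_comp {X Y Z} g h := AddCommGrpCat.ext fun x =>
    Subtype.ext (show F.map (g ≫ h) x.1 = F.map h (F.map g x.1) by rw [F.map_comp]; rfl)

theorem subFunctor_additive (F : OFF FR Λ ⥤ AddCommGrpCat.{u}) [F.Additive]
    (S : ∀ X : OFF FR Λ, AddSubgroup (F.obj X))
    (hS : ∀ {X Y : OFF FR Λ} (g : X ⟶ Y), ∀ x : F.obj X, x ∈ S X → F.map g x ∈ S Y) :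
    (subFunctor F S hS).Additive where
  map_add {X Y g g'} := AddCommGrpCat.ext fun x =>
    Subtype.ext (show F.map (g + g') x.1 = F.map g x.1 + F.map g' x.1 by rw [F.map_add]; rfl)

/-- The inclusion of a subfunctor. -/
def subInc (F : OFF FR Λ ⥤ AddCommGrpCat.{u}) (S : ∀ X : OFF FR Λ, AddSubgroup (F.obj X))
    (hS : ∀ {X Y : OFF FR Λ} (g : X ⟶ Y), ∀ x : F.obj X, x ∈ S X → F.map g x ∈ S Y) :
    subFunctor F S hS ⟶ F where
  app X := AddCommGrpCat.ofHom (S X).subtype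
  naturality X Y g := AddCommGrpCat.ext fun x => rfl


end Aux

section Aux1b
variable {Γ : Type u} [Group Γ] [PartialOrder Γ]
  [CovariantClass Γ Γ (· * ·) (· ≤ ·)] [CovariantClass Γ Γ (Function.swap (· * ·)) (· ≤ ·)]
  {R : Type u} [Ring R] {FR : RingFiltration Γ R} {Λ : Set Γ}
  {W F G T : OFF FR Λ ⥤ AddCommGrpCat.{u}}

theorem nat_apply (φ : F ⟶ G) {X Y : OFF FR Λ} (g : X ⟶ Y) (x : F.obj X) :
    φ.app Y (F.map g x) = G.map g (φ.app X x) := by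
  have h := ConcreteCategory.congr_hom (φ.naturality g) x
  simpa only [CategoryTheory.comp_apply] using h

/-- Factoring a natural transformation through a subfunctor. -/
def subLift (S : ∀ X : OFF FR Λ, AddSubgroup (F.obj X))
    (hS : ∀ {X Y : OFF FR Λ} (g : X ⟶ Y), ∀ x : F.obj X, x ∈ S X → F.map g x ∈ S Y)
    (φ : W ⟶ F) (hφ : ∀ (X : OFF FR Λ) (x : W.obj X), φ.app X x ∈ S X) :
    W ⟶ subFunctor F S hS where
  app X := AddCommGrpCat.ofHom ((toAddHom (φ.app X)).codRestrict (S X) (hφ X))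
  naturality {X Y} g := AddCommGrpCat.ext fun x => Subtype.ext (nat_apply φ g x)

theorem subLift_val (S : ∀ X : OFF FR Λ, AddSubgroup (F.obj X))
    (hS : ∀ {X Y : OFF FR Λ} (g : X ⟶ Y), ∀ x : F.obj X, x ∈ S X → F.map g x ∈ S Y)
    (φ : W ⟶ F) (hφ : ∀ (X : OFF FR Λ) (x : W.obj X), φ.app X x ∈ S X)
    (X : OFF FR Λ) (x : W.obj X) :
    (((subLift S hS φ hφ).app X x : (subFunctor F S hS).obj X) : S X) = ⟨φ.app X x, hφ X x⟩ :=
  rfl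

/-- The kernel subgroups of a natural transformation. -/
def kerS (φ : F ⟶ G) : ∀ X : OFF FR Λ, AddSubgroup (F.obj X) :=
  fun X => AddMonoidHom.ker (toAddHom (φ.app X))

theorem kerS_stable (φ : F ⟶ G) : ∀ {X Y : OFF FR Λ} (g : X ⟶ Y), ∀ x : F.obj X,
    x ∈ kerS φ X → F.map g x ∈ kerS φ Y := by
  intro X Y g x hx
  rw [kerS, AddMonoidHom.mem_ker] at hx ⊢
  show φ.app Y (F.map g x) = 0
  rw [nat_apply φ g x, show φ.app X x = 0 from hx, map_zero]

/-- The kernel subfunctor. -/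
def kerF (φ : F ⟶ G) : OFF FR Λ ⥤ AddCommGrpCat.{u} := subFunctor F (kerS φ) (kerS_stable φ)

/-- The inclusion of the kernel subfunctor. -/
def kerInc (φ : F ⟶ G) : kerF φ ⟶ F := subInc F (kerS φ) (kerS_stable φ)

/-- Lifting against the kernel subfunctor. -/
def kerLift (φ : F ⟶ G) (ψ : W ⟶ F) (hψ : ∀ (X : OFF FR Λ) (x : W.obj X), φ.app X (ψ.app X x) = 0) :
    W ⟶ kerF φ :=
  subLift (kerS φ) (kerS_stable φ) ψ fun X x => AddMonoidHom.mem_ker.mpr (hψ X x)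

/-- The range subgroups of a natural transformation. -/
def rangeS (φ : F ⟶ G) : ∀ X : OFF FR Λ, AddSubgroup (G.obj X) :=
  fun X => AddMonoidHom.range (toAddHom (φ.app X))

theorem rangeS_stable (φ : F ⟶ G) : ∀ {X Y : OFF FR Λ} (g : X ⟶ Y), ∀ x : G.obj X,
    x ∈ rangeS φ X → G.map g x ∈ rangeS φ Y := by
  intro X Y g x hx
  rw [rangeS, AddMonoidHom.mem_range] at hx ⊢
  obtain ⟨n, rfl⟩ := hx
  exact ⟨F.map g n, nat_apply φ g n⟩

/-- The range subfunctor. -/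
def rangeF (φ : F ⟶ G) : OFF FR Λ ⥤ AddCommGrpCat.{u} := subFunctor G (rangeS φ) (rangeS_stable φ)

/-- The projection onto the range subfunctor. -/
def rangeProj (φ : F ⟶ G) : F ⟶ rangeF φ :=
  subLift (rangeS φ) (rangeS_stable φ) φ fun X x => ⟨x, rfl⟩

/-- A choice of preimage for an element of the range. -/
noncomputable def rangePre (φ : F ⟶ G) (X : OFF FR Λ) (c : rangeS φ X) : F.obj X :=
  (AddMonoidHom.mem_range.mp c.2).choose

theorem rangePre_spec (φ : F ⟶ G) (X : OFF FR Λ) (c : rangeS φ X) :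
    φ.app X (rangePre φ X c) = c.1 :=
  (AddMonoidHom.mem_range.mp c.2).choose_spec

/-- Descending a natural transformation along the projection onto the range. -/
noncomputable def rangeDesc (φ : F ⟶ G) (ψ : F ⟶ T)
    (hw : ∀ (X : OFF FR Λ) (n n' : F.obj X), φ.app X n = φ.app X n' → ψ.app X n = ψ.app X n') :
    rangeF φ ⟶ T where
  app X := AddCommGrpCat.ofHom (AddMonoidHom.mk'
    (fun c : rangeS φ X => ψ.app X (rangePre φ X c)) (fun a b => by
      rw [← map_add]
      refine hw X _ _ ?_
      rw [rangePre_spec φ X, map_add, rangePre_spec φ X, rangePre_spec φ X]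
      rfl))
  naturality {X Y} g := AddCommGrpCat.ext fun c => by
    show ψ.app Y (rangePre φ Y ((rangeF φ).map g c)) = T.map g (ψ.app X (rangePre φ X c))
    rw [← nat_apply ψ g]
    refine hw Y _ _ ?_
    refine (rangePre_spec φ Y _).trans ?_
    rw [nat_apply φ g]
    exact (congrArg (fun y => G.map g y) (rangePre_spec φ X c)).symm

theorem rangeDesc_app (φ : F ⟶ G) (ψ : F ⟶ T)
    (hw : ∀ (X : OFF FR Λ) (n n' : F.obj X), φ.app X n = φ.app X n' → ψ.app X n = ψ.app X n')
    (X : OFF FR Λ) (c : rangeS φ X) :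
    (rangeDesc φ ψ hw).app X c = ψ.app X (rangePre φ X c) := rfl

end Aux1b

section Aux1c
variable {Γ : Type u} [Group Γ] [PartialOrder Γ]
  [CovariantClass Γ Γ (· * ·) (· ≤ ·)] [CovariantClass Γ Γ (Function.swap (· * ·)) (· ≤ ·)]
  {R : Type u} [Ring R] {FR : RingFiltration Γ R} {Λ : Set Γ}
  {W F G T : OFF FR Λ ⥤ AddCommGrpCat.{u}}

theorem kerInc_app_zero (φ : F ⟶ G) (X : OFF FR Λ) (x : kerS φ X) :
    φ.app X ((kerInc φ).app X x) = 0 :=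
  AddMonoidHom.mem_ker.mp x.2

theorem kerInc_comp (φ : F ⟶ G) : kerInc φ ≫ φ = 0 :=
  NatTrans.ext (funext fun X => AddCommGrpCat.ext fun x => kerInc_app_zero φ X x)

theorem kerLift_fac (φ : F ⟶ G) (ψ : W ⟶ F)
    (hψ : ∀ (X : OFF FR Λ) (x : W.obj X), φ.app X (ψ.app X x) = 0) :
    kerLift φ ψ hψ ≫ kerInc φ = ψ :=
  NatTrans.ext (funext fun X => AddCommGrpCat.ext fun x => rfl)

theorem kerLift_unique (φ : F ⟶ G) (ψ : W ⟶ F)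
    (hψ : ∀ (X : OFF FR Λ) (x : W.obj X), φ.app X (ψ.app X x) = 0)
    (m : W ⟶ kerF φ) (hm : m ≫ kerInc φ = ψ) : m = kerLift φ ψ hψ :=
  NatTrans.ext (funext fun X => AddCommGrpCat.ext fun x => Subtype.ext (by
    have h2 := ConcreteCategory.congr_hom (congrArg (fun t => NatTrans.app t X) hm) x
    simp only [NatTrans.comp_app, CategoryTheory.comp_apply] at h2
    exact h2))

theorem rangeProj_app_val (φ : F ⟶ G) (X : OFF FR Λ) (x : F.obj X) :
    (((rangeProj φ).app X x : (rangeF φ).obj X) : rangeS φ X) = ⟨φ.app X x, ⟨x, rfl⟩⟩ :=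
  rfl

theorem rangeProj_zero (φ : F ⟶ G) (χ : W ⟶ F)
    (hχ : ∀ (X : OFF FR Λ) (x : W.obj X), φ.app X (χ.app X x) = 0) :
    χ ≫ rangeProj φ = 0 :=
  NatTrans.ext (funext fun X => AddCommGrpCat.ext fun x => Subtype.ext (by
    have := hχ X x
    exact this))

theorem rangeProj_comp_desc (φ : F ⟶ G) (ψ : F ⟶ T)
    (hw : ∀ (X : OFF FR Λ) (n n' : F.obj X), φ.app X n = φ.app X n' → ψ.app X n = ψ.app X n') :
    rangeProj φ ≫ rangeDesc φ ψ hw = ψ :=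
  NatTrans.ext (funext fun X => AddCommGrpCat.ext fun x =>
    hw X _ x (rangePre_spec φ X _))

theorem rangeDesc_unique (φ : F ⟶ G) (ψ : F ⟶ T)
    (hw : ∀ (X : OFF FR Λ) (n n' : F.obj X), φ.app X n = φ.app X n' → ψ.app X n = ψ.app X n')
    (m : rangeF φ ⟶ T) (hm : rangeProj φ ≫ m = ψ) : m = rangeDesc φ ψ hw := by
  refine NatTrans.ext (funext fun X => AddCommGrpCat.ext fun c => ?_)
  have hc : (rangeProj φ).app X (rangePre φ X c) = c := Subtype.ext (rangePre_spec φ X c)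
  calc m.app X c = m.app X ((rangeProj φ).app X (rangePre φ X c)) := by rw [hc]
    _ = ψ.app X (rangePre φ X c) := by
        have h2 := ConcreteCategory.congr_hom (congrArg (fun t => NatTrans.app t X) hm) (rangePre φ X c)
        simpa only [NatTrans.comp_app, CategoryTheory.comp_apply] using h2
    _ = (rangeDesc φ ψ hw).app X c := rfl

end Aux1c

section Aux2
variable {Γ : Type u} [Group Γ] [PartialOrder Γ]
  [CovariantClass Γ Γ (· * ·) (· ≤ ·)] [CovariantClass Γ Γ (Function.swap (· * ·)) (· ≤ ·)]
  {R : Type u} [Ring R] {FR : RingFiltration Γ R} {Λ : Set Γ}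

theorem pi_zero_mem {G H : AddCommGrpCat.{u}} (t : G ⟶ H) (x : H)
    (h : cokernel.π t x = 0) : x ∈ AddMonoidHom.range (toAddHom t) := by
  have h5 : (AddCommGrpCat.cokernelIsoQuotient t).hom (cokernel.π t x)
      = QuotientAddGroup.mk' (AddMonoidHom.range t.hom) x := by
    simp only [AddCommGrpCat.cokernelIsoQuotient]
    exact cokernel.π_desc_apply _ _ _ _
  rw [h, map_zero] at h5
  exact (QuotientAddGroup.eq_zero_iff x).mp h5.symm

/-- Any morphism of `oFF_Λ R`, transported to an endomorphism of `∞`. -/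
def toInf {X Y : OFF FR Λ} (g : X ⟶ Y) : (OFF.infty : OFF FR Λ) ⟶ OFF.infty :=
  ⟨g.1, AddSubgroup.mem_top _⟩

theorem toInf_id (X : OFF FR Λ) : toInf (𝟙 X) = 𝟙 (OFF.infty : OFF FR Λ) := Subtype.ext rfl

theorem toInf_comp {X Y Z : OFF FR Λ} (g : X ⟶ Y) (h : Y ⟶ Z) :
    toInf (g ≫ h) = toInf g ≫ toInf h := Subtype.ext rfl

theorem toInf_add {X Y : OFF FR Λ} (g g' : X ⟶ Y) :
    toInf (g + g') = toInf g + toInf g' := Subtype.ext rfl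

theorem toInf_unitHom {X Y : OFF FR Λ} (h : OFF.le FR Λ X Y) :
    toInf (unitHom FR Λ X Y h) = 𝟙 (OFF.infty : OFF FR Λ) := Subtype.ext rfl

theorem unitHom_comp_toInf {X Y : OFF FR Λ} (g : X ⟶ Y) :
    g ≫ unitHom FR Λ Y OFF.infty (le_infty FR Λ Y)
      = unitHom FR Λ X OFF.infty (le_infty FR Λ X) ≫ toInf g :=
  Subtype.ext (by show (1 : R) * g.1 = g.1 * 1; rw [one_mul, mul_one])

variable {M N : Preglid FR Λ} (f : M ⟶ N)

/-- The constant-ish functor `X ↦ coker f_∞` with `R`-action maps. -/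
def cinfF : OFF FR Λ ⥤ AddCommGrpCat.{u} where
  obj _ := cokernel (pgapp FR Λ f OFF.infty)
  map {X Y} g := cokernel.desc _
    (N.obj.obj.map (toInf g) ≫ cokernel.π (pgapp FR Λ f OFF.infty)) (by
      have hnat : pgapp FR Λ f OFF.infty ≫ N.obj.obj.map (toInf g)
          = M.obj.obj.map (toInf g) ≫ pgapp FR Λ f OFF.infty :=
        ((natOf f).naturality (toInf g)).symm
      rw [← Category.assoc, hnat, Category.assoc, cokernel.condition, comp_zero])
  map_id X := by
    refine (cancel_epi (cokernel.π (pgapp FR Λ f OFF.infty))).mp ?_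
    simp [toInf_id]
  map_comp {X Y Z} g h := by
    refine (cancel_epi (cokernel.π (pgapp FR Λ f OFF.infty))).mp ?_
    simp [toInf_comp]

theorem cinfF_additive : (cinfF f).Additive where
  map_add {X Y g g'} := by
    haveI := N.obj.property
    refine (cancel_epi (cokernel.π (pgapp FR Λ f OFF.infty))).mp ?_
    simp [cinfF, toInf_add, Preadditive.add_comp, Preadditive.comp_add]
    refine Eq.trans ?_ (Preadditive.comp_add _ _ _ _ _ _).symm
    rw [cokernel.π_desc, cokernel.π_desc]

theorem cinfF_map_unitHom {X Y : OFF FR Λ} (h : OFF.le FR Λ X Y) :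
    (cinfF f).map (unitHom FR Λ X Y h) = 𝟙 (cokerInf FR Λ f) := by
  refine (cancel_epi (cokernel.π (pgapp FR Λ f OFF.infty))).mp ?_
  simp [cinfF, toInf_unitHom]
  exact (Category.comp_id _).symm

/-- `cmapTo` as a natural transformation `N ⟶ cinfF`. -/
def nuT : N.obj.obj ⟶ cinfF f where
  app X := cmapTo FR Λ f X
  naturality {X Y} g := by
    show N.obj.obj.map g ≫ cmapTo FR Λ f Y = cmapTo FR Λ f X ≫ (cinfF f).map g
    dsimp only [cmapTo, cinfF, cokerInf]
    rw [Category.assoc, cokernel.π_desc, ← Category.assoc, ← Functor.map_comp,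
      ← Category.assoc, ← Functor.map_comp, unitHom_comp_toInf]

theorem nuT_apply (X : OFF FR Λ) (x : N.obj.obj.obj X) :
    (nuT f).app X x = cmapTo FR Λ f X x := rfl

end Aux2

section Aux3
variable {Γ : Type u} [Group Γ] [PartialOrder Γ]
  [CovariantClass Γ Γ (· * ·) (· ≤ ·)] [CovariantClass Γ Γ (Function.swap (· * ·)) (· ≤ ·)]
  {R : Type u} [Ring R] {FR : RingFiltration Γ R} {Λ : Set Γ}

theorem subFunctor_preglider (F : OFF FR Λ ⥤ AddCommGrpCat.{u})
    (S : ∀ X : OFF FR Λ, AddSubgroup (F.obj X))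
    (hS : ∀ {X Y : OFF FR Λ} (g : X ⟶ Y), ∀ x : F.obj X, x ∈ S X → F.map g x ∈ S Y)
    (hF : ∀ (X Y : OFF FR Λ) (h : OFF.le FR Λ X Y),
      Function.Injective (F.map (unitHom FR Λ X Y h)))
    (X Y : OFF FR Λ) (h : OFF.le FR Λ X Y) :
    Function.Injective ((subFunctor F S hS).map (unitHom FR Λ X Y h)) :=
  fun a b hab => Subtype.ext (hF X Y h (congrArg Subtype.val hab))

variable {M N : Preglid FR Λ} (f : M ⟶ N)

/-! ### The kernel -/

/-- The kernel preglider. -/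
def Kpg : Preglid FR Λ :=
  ⟨⟨kerF (natOf f), by haveI := M.obj.property; exact subFunctor_additive _ _ _⟩,
    fun X Y h => subFunctor_preglider M.obj.obj (kerS (natOf f)) (kerS_stable (natOf f))
      M.property X Y h⟩

/-- The inclusion of the kernel. -/
def kiT : Kpg f ⟶ M := ⟨⟨kerInc (natOf f)⟩⟩

theorem kiT_comp : kiT f ≫ f = 0 :=
  pghom_ext' ((kerInc_comp (natOf f)).trans (natOf_zero (A := Kpg f) (B := N)).symm)

def kerIsLimit : IsLimit (KernelFork.ofι (kiT f) (kiT_comp f)) :=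
  KernelFork.IsLimit.ofι _ _
    (fun {V} g hg => ⟨⟨kerLift (natOf f) (natOf g) (fun X x => comp_eq_zero_apply hg X x)⟩⟩)
    (fun {V} g hg =>
      pghom_ext' (kerLift_fac _ _ (fun X x => comp_eq_zero_apply hg X x)))
    (fun {V} g hg m hm =>
      pghom_ext' (kerLift_unique _ _ (fun X x => comp_eq_zero_apply hg X x) (natOf m) (congrArg natOf hm)))

/-! ### The cokernel -/

/-- The cokernel preglider. -/
def Cqpg : Preglid FR Λ :=
  ⟨⟨rangeF (nuT f), by haveI := cinfF_additive f; exact subFunctor_additive _ _ _⟩,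
    fun X Y h => subFunctor_preglider (cinfF f) (rangeS (nuT f)) (rangeS_stable (nuT f))
      (fun X' Y' h' => by
        rw [cinfF_map_unitHom f h']
        intro a b hab
        exact hab) X Y h⟩

/-- The projection onto the cokernel. -/
def qpT : N ⟶ Cqpg f := ⟨⟨rangeProj (nuT f)⟩⟩

theorem cmapTo_f_apply (X : OFF FR Λ) (x : M.obj.obj.obj X) :
    cmapTo FR Λ f X ((natOf f).app X x) = 0 := by
  show cokernel.π (pgapp FR Λ f OFF.infty)
    (N.obj.obj.map (unitHom FR Λ X OFF.infty (le_infty FR Λ X)) ((natOf f).app X x)) = 0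
  rw [← naturality_apply f (unitHom FR Λ X OFF.infty (le_infty FR Λ X)) x]
  exact cokernel.condition_apply (pgapp FR Λ f OFF.infty) _

theorem qpT_comp : f ≫ qpT f = 0 :=
  pghom_ext' ((rangeProj_zero (nuT f) (natOf f) (fun X x => cmapTo_f_apply f X x)).trans
    (natOf_zero (A := M) (B := Cqpg f)).symm)

theorem cq_welldef {T : Preglid FR Λ} (t : N ⟶ T) (ht : f ≫ t = 0) (X : OFF FR Λ)
    (n n' : N.obj.obj.obj X) (h : (nuT f).app X n = (nuT f).app X n') :
    (natOf t).app X n = (natOf t).app X n' := by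
  have h0 : cmapTo FR Λ f X (n - n') = 0 := by
    have h' : cmapTo FR Λ f X n = cmapTo FR Λ f X n' := h
    rw [map_sub, h', sub_self]
  have h1 : cokernel.π (pgapp FR Λ f OFF.infty)
      (N.obj.obj.map (unitHom FR Λ X OFF.infty (le_infty FR Λ X)) (n - n')) = 0 := h0
  obtain ⟨m, hm⟩ := pi_zero_mem _ _ h1
  have h2 : T.obj.obj.map (unitHom FR Λ X OFF.infty (le_infty FR Λ X))
      ((natOf t).app X (n - n')) = 0 := by
    rw [← naturality_apply t _ (n - n'), ← hm]
    exact comp_eq_zero_apply ht OFF.infty m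
  have h3 : (natOf t).app X (n - n') = 0 :=
    T.property X OFF.infty (le_infty FR Λ X) (by rw [h2, map_zero])
  rw [map_sub, sub_eq_zero] at h3
  exact h3

noncomputable def cqIsColimit : IsColimit (CokernelCofork.ofπ (qpT f) (qpT_comp f)) :=
  CokernelCofork.IsColimit.ofπ _ _
    (fun {T} t ht => ⟨⟨rangeDesc (nuT f) (natOf t) (cq_welldef f t ht)⟩⟩)
    (fun {T} t ht =>
      pghom_ext' (rangeProj_comp_desc _ _ (cq_welldef f t ht)))
    (fun {T} t ht m hm =>
      pghom_ext' (rangeDesc_unique _ _ (cq_welldef f t ht) (natOf m) (congrArg natOf hm)))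

/-! ### The image -/

/-- The image preglider. -/
def Ipg : Preglid FR Λ :=
  ⟨⟨kerF (nuT f), by haveI := N.obj.property; exact subFunctor_additive _ _ _⟩,
    fun X Y h => subFunctor_preglider N.obj.obj (kerS (nuT f)) (kerS_stable (nuT f))
      N.property X Y h⟩

/-- The inclusion of the image. -/
def iiT : Ipg f ⟶ N := ⟨⟨kerInc (nuT f)⟩⟩

theorem iiT_comp : iiT f ≫ qpT f = 0 :=
  pghom_ext' ((rangeProj_zero (nuT f) (kerInc (nuT f))
    (fun X x => kerInc_app_zero (nuT f) X x)).trans (natOf_zero (A := Ipg f) (B := Cqpg f)).symm)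

theorem qp_zero_of (W' : Preglid FR Λ) (g : W' ⟶ N) (hg : g ≫ qpT f = 0) (X : OFF FR Λ)
    (x : W'.obj.obj.obj X) : (nuT f).app X ((natOf g).app X x) = 0 := by
  have h2 := comp_eq_zero_apply hg X x
  exact congrArg (fun c : rangeS (nuT f) X => (c : (cinfF f).obj X)) h2

def imIsLimit : IsLimit (KernelFork.ofι (iiT f) (iiT_comp f)) :=
  KernelFork.IsLimit.ofι _ _
    (fun {V} g hg => ⟨⟨kerLift (nuT f) (natOf g) (qp_zero_of f V g hg)⟩⟩)
    (fun {V} g hg =>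
      pghom_ext' (kerLift_fac _ _ (qp_zero_of f V g hg)))
    (fun {V} g hg m hm =>
      pghom_ext' (kerLift_unique _ _ (qp_zero_of f V g hg) (natOf m) (congrArg natOf hm)))

/-! ### The coimage -/

/-- The coimage preglider. -/
def Jpg : Preglid FR Λ :=
  ⟨⟨rangeF (natOf f), by haveI := N.obj.property; exact subFunctor_additive _ _ _⟩,
    fun X Y h => subFunctor_preglider N.obj.obj (rangeS (natOf f)) (rangeS_stable (natOf f))
      N.property X Y h⟩

/-- The projection onto the coimage. -/
def cpT : M ⟶ Jpg f := ⟨⟨rangeProj (natOf f)⟩⟩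

theorem cpT_comp : kiT f ≫ cpT f = 0 :=
  pghom_ext' ((rangeProj_zero (natOf f) (kerInc (natOf f))
    (fun X x => kerInc_app_zero (natOf f) X x)).trans (natOf_zero (A := Kpg f) (B := Jpg f)).symm)

theorem j_welldef {T : Preglid FR Λ} (t : M ⟶ T) (ht : kiT f ≫ t = 0) (X : OFF FR Λ)
    (n n' : M.obj.obj.obj X) (h : (natOf f).app X n = (natOf f).app X n') :
    (natOf t).app X n = (natOf t).app X n' := by
  have h0 : n - n' ∈ kerS (natOf f) X :=
    AddMonoidHom.mem_ker.mpr (show (natOf f).app X (n - n') = 0 by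
      rw [map_sub, h, sub_self])
  have h2 : (natOf t).app X n - (natOf t).app X n' = 0 := by
    rw [← map_sub]
    exact comp_eq_zero_apply ht X (⟨n - n', h0⟩ : kerS (natOf f) X)
  rw [sub_eq_zero] at h2
  exact h2

noncomputable def jIsColimit : IsColimit (CokernelCofork.ofπ (cpT f) (cpT_comp f)) :=
  CokernelCofork.IsColimit.ofπ _ _
    (fun {T} t ht => ⟨⟨rangeDesc (natOf f) (natOf t) (j_welldef f t ht)⟩⟩)
    (fun {T} t ht =>
      pghom_ext' (rangeProj_comp_desc _ _ (j_welldef f t ht)))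
    (fun {T} t ht m hm =>
      pghom_ext' (rangeDesc_unique _ _ (j_welldef f t ht) (natOf m) (congrArg natOf hm)))

end Aux3
/-- Let `f : M ⟶ N` be a morphism in `Preglid FR`.  Kernels and
cokernels of `f` exist in `Preglid FR`, and for each object `X` of `oFF_Λ R` there are
canonical isomorphisms `(ker f)(X) ≅ ker (f_X)`,
`(coker f)(X) ≅ im (N(X) → coker (f_∞))`, `(im f)(X) ≅ ker (N(X) → coker (f_∞))` and
`(coim f)(X) ≅ im (f_X)`, where `im f = ker (N → coker f)` and
`coim f = coker (ker f → M)` are computed in `Preglid FR`.  Canonicity is expressed by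
compatibility of each isomorphism with the structural maps. -/
theorem statement_11 (FR : RingFiltration Γ R) (Λ : Set Γ)
    (M N : Preglid FR Λ) (f : M ⟶ N) :
    -- a kernel of `f` exists ...
    ∃ (K : Preglid FR Λ) (ki : K ⟶ M) (wk : ki ≫ f = 0),
      Nonempty (IsLimit (KernelFork.ofι ki wk)) ∧
      -- ... with `(ker f)(X) ≅ ker (f_X)` canonically
      (∀ X : OFF FR Λ,
        ∃ e : K.obj.obj.obj X ≃+ AddMonoidHom.ker (toAddHom (pgapp FR Λ f X)),
          ∀ x, ((e x : AddMonoidHom.ker (toAddHom (pgapp FR Λ f X))) : M.obj.obj.obj X)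
            = pgapp FR Λ ki X x) ∧
      -- a cokernel of `f` exists ...
      ∃ (Cq : Preglid FR Λ) (qp : N ⟶ Cq) (wq : f ≫ qp = 0),
        Nonempty (IsColimit (CokernelCofork.ofπ qp wq)) ∧
        -- ... with `(coker f)(X) ≅ im (N(X) → coker (f_∞))`, compatibly with `π`
        (∀ X : OFF FR Λ,
          ∃ e : Cq.obj.obj.obj X ≃+ AddMonoidHom.range (toAddHom (cmapTo FR Λ f X)),
            ∀ y : N.obj.obj.obj X,
              ((e (pgapp FR Λ qp X y) :
                  AddMonoidHom.range (toAddHom (cmapTo FR Λ f X))) :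
                cokerInf FR Λ f) = cmapTo FR Λ f X y) ∧
        -- the image `im f = ker (N → coker f)` exists ...
        (∃ (I : Preglid FR Λ) (ii : I ⟶ N) (wi : ii ≫ qp = 0),
          Nonempty (IsLimit (KernelFork.ofι ii wi)) ∧
          -- ... with `(im f)(X) ≅ ker (N(X) → coker (f_∞))`
          ∀ X : OFF FR Λ,
            ∃ e : I.obj.obj.obj X ≃+ AddMonoidHom.ker (toAddHom (cmapTo FR Λ f X)),
              ∀ x, ((e x : AddMonoidHom.ker (toAddHom (cmapTo FR Λ f X))) :
                  N.obj.obj.obj X) = pgapp FR Λ ii X x) ∧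
        -- the coimage `coim f = coker (ker f → M)` exists ...
        (∃ (J : Preglid FR Λ) (cp : M ⟶ J) (wc : ki ≫ cp = 0),
          Nonempty (IsColimit (CokernelCofork.ofπ cp wc)) ∧
          -- ... with `(coim f)(X) ≅ im (f_X)`, compatibly with `π`
          ∀ X : OFF FR Λ,
            ∃ e : J.obj.obj.obj X ≃+ AddMonoidHom.range (toAddHom (pgapp FR Λ f X)),
              ∀ x : M.obj.obj.obj X,
                ((e (pgapp FR Λ cp X x) :
                    AddMonoidHom.range (toAddHom (pgapp FR Λ f X))) : N.obj.obj.obj X)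
                  = pgapp FR Λ f X x) := by
  refine ⟨Kpg f, kiT f, kiT_comp f, ⟨kerIsLimit f⟩,
    fun X => ⟨AddEquiv.refl _, fun x => rfl⟩,
    Cqpg f, qpT f, qpT_comp f, ⟨cqIsColimit f⟩,
    fun X => ⟨AddEquiv.refl _, fun y => rfl⟩,
    ⟨Ipg f, iiT f, iiT_comp f, ⟨imIsLimit f⟩,
      fun X => ⟨AddEquiv.refl _, fun x => rfl⟩⟩,
    ⟨Jpg f, cpT f, cpT_comp f, ⟨jIsColimit f⟩,
      fun X => ⟨AddEquiv.refl _, fun x => rfl⟩⟩⟩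

end Statements

end GliderPaper
end
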